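/- Let R = k[[x,y]]/(xy) over a field k and N = R/(x²). Then N is not torsion-free: the coset of x in N is a nonzero element annihilated by the non-zerodivisor x + y. Nevertheless M ⊗_R N is torsion-free, where M = R/(x). -/

import Mathlib

open MvPowerSeries Finsupp

/-- The hypersurface `R = k[[x,y]]/(xy)`. -/
noncomputable abbrev R9 (k : Type) [Field k] :=
  MvPowerSeries (Fin 2) k ⧸
    Ideal.span {(MvPowerSeries.X 0 : MvPowerSeries (Fin 2) k) * MvPowerSeries.X 1}

/-- The image of `x` in `R = k[[x,y]]/(xy)`. -/
noncomputable abbrev xR9 (k : Type) [Field k] : R9 k :=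
  Ideal.Quotient.mk _ (MvPowerSeries.X 0)

/-- The image of `y` in `R = k[[x,y]]/(xy)`. -/
noncomputable abbrev yR9 (k : Type) [Field k] : R9 k :=
  Ideal.Quotient.mk _ (MvPowerSeries.X 1)


section Aux

variable {k : Type} [Field k]

lemma aux_mem_span_monomial (n : Fin 2 →₀ ℕ) (f : MvPowerSeries (Fin 2) k) :
    f ∈ Ideal.span {(MvPowerSeries.monomial n) 1} ↔
      ∀ d : Fin 2 →₀ ℕ, ¬ n ≤ d → MvPowerSeries.coeff d f = 0 := by
  rw [Ideal.mem_span_singleton]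
  constructor
  · rintro ⟨g, rfl⟩ d hd
    rw [coeff_monomial_mul, if_neg hd]
  · intro h
    refine ⟨show MvPowerSeries (Fin 2) k from fun d => MvPowerSeries.coeff (d + n) f, ?_⟩
    ext d
    rw [coeff_monomial_mul]
    split_ifs with hle
    · simp only [one_mul, coeff_apply, tsub_add_cancel_of_le hle]
      exact (congrArg f (tsub_add_cancel_of_le hle)).symm
    · exact h d hle

lemma aux_X0X1_eq : (MvPowerSeries.X 0 * MvPowerSeries.X 1 : MvPowerSeries (Fin 2) k)
    = (MvPowerSeries.monomial (single 0 1 + single 1 1)) 1 := by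
  rw [X_def, X_def, monomial_mul_monomial, one_mul]

lemma aux_mem_span_X0 (f : MvPowerSeries (Fin 2) k) :
    f ∈ Ideal.span {(MvPowerSeries.X 0 : MvPowerSeries (Fin 2) k)} ↔
      ∀ d : Fin 2 →₀ ℕ, d 0 = 0 → MvPowerSeries.coeff d f = 0 := by
  rw [X_def, aux_mem_span_monomial]
  refine forall_congr' fun d => imp_congr ?_ Iff.rfl
  rw [Finsupp.single_le_iff]
  omega

lemma aux_mem_span_X0X1 (f : MvPowerSeries (Fin 2) k) :
    f ∈ Ideal.span {(MvPowerSeries.X 0 * MvPowerSeries.X 1 : MvPowerSeries (Fin 2) k)} ↔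
      ∀ d : Fin 2 →₀ ℕ, (d 0 = 0 ∨ d 1 = 0) → MvPowerSeries.coeff d f = 0 := by
  rw [aux_X0X1_eq, aux_mem_span_monomial]
  refine forall_congr' fun d => imp_congr ?_ Iff.rfl
  rw [Finsupp.le_def, not_forall]
  constructor
  · rintro ⟨i, hi⟩
    fin_cases i <;> simp at hi <;> omega
  · rintro (h | h)
    · exact ⟨0, by simp; omega⟩
    · exact ⟨1, by simp; omega⟩

lemma aux_eq_single_one (d : Fin 2 →₀ ℕ) (h : d 0 = 0) : d = single 1 (d 1) := by
  ext i
  fin_cases i <;> simp [h]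

lemma aux_span_X0_prime (f g : MvPowerSeries (Fin 2) k)
    (hfg : f * g ∈ Ideal.span {(MvPowerSeries.X 0 : MvPowerSeries (Fin 2) k)})
    (hf : f ∉ Ideal.span {(MvPowerSeries.X 0 : MvPowerSeries (Fin 2) k)}) :
    g ∈ Ideal.span {(MvPowerSeries.X 0 : MvPowerSeries (Fin 2) k)} := by
  rw [aux_mem_span_X0] at hfg hf ⊢
  push_neg at hf
  by_contra hg
  rw [not_forall] at hg
  push_neg at hg
  have hf' : ∃ m : ℕ, MvPowerSeries.coeff (single 1 m) f ≠ 0 := by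
    obtain ⟨d, hd0, hd⟩ := hf
    exact ⟨d 1, by rwa [← aux_eq_single_one d hd0]⟩
  have hg' : ∃ n : ℕ, MvPowerSeries.coeff (single 1 n) g ≠ 0 := by
    obtain ⟨d, hd0, hd⟩ := hg
    exact ⟨d 1, by rwa [← aux_eq_single_one d hd0]⟩
  classical
  set m := Nat.find hf' with hm
  set n := Nat.find hg' with hn
  have key := hfg (single 1 (m + n)) (by simp)
  rw [MvPowerSeries.coeff_mul] at key
  rw [Finset.sum_eq_single (single 1 m, single 1 n)] at key
  · exact absurd key (mul_ne_zero (Nat.find_spec hf') (Nat.find_spec hg'))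
  · rintro ⟨d1, d2⟩ hmem hne
    rw [Finset.HasAntidiagonal.mem_antidiagonal] at hmem
    have h0 : d1 0 = 0 ∧ d2 0 = 0 := by
      have := congrFun (congrArg (fun x : Fin 2 →₀ ℕ => (x : Fin 2 → ℕ)) hmem) 0
      simp at this
      omega
    have h1 : d1 1 + d2 1 = m + n := by
      have := congrFun (congrArg (fun x : Fin 2 →₀ ℕ => (x : Fin 2 → ℕ)) hmem) 1
      simpa using this
    have hd1 : d1 = single 1 (d1 1) := aux_eq_single_one d1 h0.1
    have hd2 : d2 = single 1 (d2 1) := aux_eq_single_one d2 h0.2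
    rcases lt_trichotomy (d1 1) m with h | h | h
    · have hz : MvPowerSeries.coeff (single 1 (d1 1)) f = 0 := not_not.mp (Nat.find_min hf' h)
      rw [hd1]
      simpa using Or.inl hz
    · exfalso
      apply hne
      have : d2 1 = n := by omega
      rw [hd1, hd2, h, this]
    · have : d2 1 < n := by omega
      have hz : MvPowerSeries.coeff (single 1 (d2 1)) g = 0 := not_not.mp (Nat.find_min hg' this)
      rw [hd2]
      simpa using Or.inr hz
  · intro h
    exfalso
    apply h
    rw [Finset.HasAntidiagonal.mem_antidiagonal, ← single_add]

lemma aux_I01_le_span_X0 :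
    Ideal.span {(MvPowerSeries.X 0 * MvPowerSeries.X 1 : MvPowerSeries (Fin 2) k)} ≤
      Ideal.span {(MvPowerSeries.X 0 : MvPowerSeries (Fin 2) k)} := by
  rw [Ideal.span_le, Set.singleton_subset_iff]
  exact Ideal.mem_span_singleton.mpr (dvd_mul_right _ _)

lemma aux_torsion_bot_of_equiv {R M N : Type*} [CommRing R] [AddCommGroup M] [Module R M]
    [AddCommGroup N] [Module R N] (e : M ≃ₗ[R] N)
    (h : Submodule.torsion R N = ⊥) : Submodule.torsion R M = ⊥ := by
  rw [eq_bot_iff]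
  intro x hx
  obtain ⟨a, ha⟩ := (Submodule.mem_torsion_iff x).mp hx
  have : e x ∈ Submodule.torsion R N := by
    refine (Submodule.mem_torsion_iff _).mpr ⟨a, ?_⟩
    rw [Submonoid.smul_def] at ha ⊢
    rw [← map_smul, ha, map_zero]
  rw [h, Submodule.mem_bot] at this
  exact Submodule.mem_bot _ |>.mpr (e.map_eq_zero_iff.mp this)

end Aux

section Main

variable (k : Type) [Field k]

/-- Pulling membership in `span {x̄}` back to the power series ring. -/
lemma aux_pull (w : MvPowerSeries (Fin 2) k) :
    Ideal.Quotient.mk _ w ∈ Ideal.span {xR9 k} ↔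
      w ∈ Ideal.span {(MvPowerSeries.X 0 : MvPowerSeries (Fin 2) k)} := by
  constructor
  · intro hw
    obtain ⟨c, hc⟩ := Ideal.mem_span_singleton.mp hw
    obtain ⟨h, rfl⟩ := Ideal.Quotient.mk_surjective c
    rw [← map_mul, Ideal.Quotient.eq] at hc
    have h1 : w - MvPowerSeries.X 0 * h ∈
        Ideal.span {(MvPowerSeries.X 0 : MvPowerSeries (Fin 2) k)} := aux_I01_le_span_X0 hc
    have h2 : MvPowerSeries.X 0 * h ∈
        Ideal.span {(MvPowerSeries.X 0 : MvPowerSeries (Fin 2) k)} :=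
      Ideal.mul_mem_right _ _ (Ideal.mem_span_singleton_self _)
    simpa using add_mem h1 h2
  · intro hw
    obtain ⟨h, rfl⟩ := Ideal.mem_span_singleton.mp hw
    rw [map_mul]
    exact Ideal.mul_mem_right _ _ (Ideal.mem_span_singleton_self _)

lemma aux_y_ne_zero : yR9 k ≠ 0 := by
  rw [Ne, Ideal.Quotient.eq_zero_iff_mem, aux_mem_span_X0X1]
  intro h
  have := h (single 1 1) (Or.inl (by simp))
  rw [X_def, coeff_monomial_same] at this
  exact one_ne_zero this

lemma aux_nzd_not_mem (a : R9 k) (ha : a ∈ nonZeroDivisors (R9 k))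
    (f : MvPowerSeries (Fin 2) k) (hf : Ideal.Quotient.mk _ f = a) :
    f ∉ Ideal.span {(MvPowerSeries.X 0 : MvPowerSeries (Fin 2) k)} := by
  intro hmem
  obtain ⟨h, rfl⟩ := Ideal.mem_span_singleton.mp hmem
  have hy : yR9 k * a = 0 := by
    rw [← hf, ← map_mul, Ideal.Quotient.eq_zero_iff_mem]
    have : MvPowerSeries.X 1 * (MvPowerSeries.X 0 * h)
        = MvPowerSeries.X 0 * MvPowerSeries.X 1 * h := by ring
    rw [this]
    exact Ideal.mul_mem_right _ _ (Ideal.mem_span_singleton_self _)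
  exact aux_y_ne_zero k (mem_nonZeroDivisors_iff_right.mp ha _ hy)

lemma aux_torsion_R_mod_x :
    Submodule.torsion (R9 k) (R9 k ⧸ Ideal.span {xR9 k}) = ⊥ := by
  rw [eq_bot_iff]
  intro q hq
  obtain ⟨a, ha⟩ := (Submodule.mem_torsion_iff q).mp hq
  obtain ⟨z, rfl⟩ := Ideal.Quotient.mk_surjective q
  obtain ⟨g, rfl⟩ := Ideal.Quotient.mk_surjective z
  obtain ⟨f, hfa⟩ := Ideal.Quotient.mk_surjective (a : R9 k)
  rw [Submodule.mem_bot]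
  have ha' : Ideal.Quotient.mk (Ideal.span {xR9 k})
      ((a : R9 k) * Ideal.Quotient.mk _ g) = 0 := by
    rw [Submonoid.smul_def] at ha
    exact ha
  rw [Ideal.Quotient.eq_zero_iff_mem, ← hfa, ← map_mul, aux_pull] at ha'
  have hg : g ∈ Ideal.span {(MvPowerSeries.X 0 : MvPowerSeries (Fin 2) k)} :=
    aux_span_X0_prime f g ha' (aux_nzd_not_mem k a a.2 f hfa)
  rw [Ideal.Quotient.eq_zero_iff_mem]
  exact (aux_pull k g).mpr hg

end Main

set_option maxHeartbeats 2000000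
set_option synthInstance.maxHeartbeats 400000

/-- For `R = k[[x,y]]/(xy)`, `N = R/(x²)` is not torsion-free: the coset of `x` is a nonzero
element killed by the non-zerodivisor `x + y`; nevertheless `M ⊗_R N` is torsion-free, where
`M = R/(x)`. -/
theorem stmt9 (k : Type) [Field k] :
    (Ideal.Quotient.mk (Ideal.span {xR9 k ^ 2}) (xR9 k) ≠ 0) ∧
    (xR9 k + yR9 k ∈ nonZeroDivisors (R9 k)) ∧
    ((xR9 k + yR9 k) • Ideal.Quotient.mk (Ideal.span {xR9 k ^ 2}) (xR9 k) = 0) ∧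
    Submodule.torsion (R9 k) (R9 k ⧸ Ideal.span {xR9 k ^ 2}) ≠ ⊥ ∧
    Submodule.torsion (R9 k)
      (TensorProduct (R9 k) (R9 k ⧸ Ideal.span {xR9 k}) (R9 k ⧸ Ideal.span {xR9 k ^ 2})) = ⊥ := by
  have hP1 : (Ideal.Quotient.mk (Ideal.span {xR9 k ^ 2}) (xR9 k) ≠ 0) := by
    rw [Ne, Ideal.Quotient.eq_zero_iff_mem, Ideal.mem_span_singleton]
    rintro ⟨c, hc⟩
    obtain ⟨h, rfl⟩ := Ideal.Quotient.mk_surjective c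
    rw [← map_pow, ← map_mul, Ideal.Quotient.eq, aux_mem_span_X0X1] at hc
    have h1 := hc (single 0 1) (Or.inr (by simp))
    rw [map_sub, X_pow_eq, coeff_monomial_mul,
      if_neg (by rw [Finsupp.single_le_iff]; simp), X_def, coeff_monomial_same, sub_zero] at h1
    exact one_ne_zero h1
  have hP2 : xR9 k + yR9 k ∈ nonZeroDivisors (R9 k) := by
    rw [mem_nonZeroDivisors_iff_right]
    intro z hz
    obtain ⟨f, rfl⟩ := Ideal.Quotient.mk_surjective z
    rw [Ideal.Quotient.eq_zero_iff_mem]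
    have hz' : f * (MvPowerSeries.X 0 + MvPowerSeries.X 1) ∈
        Ideal.span {(MvPowerSeries.X 0 : MvPowerSeries (Fin 2) k) * MvPowerSeries.X 1} := by
      rw [← Ideal.Quotient.eq_zero_iff_mem, map_mul, map_add]
      exact hz
    rw [aux_mem_span_X0X1] at hz' ⊢
    intro d hd
    rcases hd with hd | hd
    · have h1 := hz' (d + single 1 1) (Or.inl (by simp [hd]))
      rw [mul_add, map_add, X_def 1, coeff_add_mul_monomial, mul_one, X_def 0,
        coeff_mul_monomial,
        if_neg (by simp [Finsupp.single_le_iff, Finsupp.add_apply, hd])] at h1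
      simpa using h1
    · have h1 := hz' (d + single 0 1) (Or.inr (by simp [hd]))
      rw [mul_add, map_add, X_def 0, coeff_add_mul_monomial, mul_one, X_def 1,
        coeff_mul_monomial,
        if_neg (by simp [Finsupp.single_le_iff, Finsupp.add_apply, hd])] at h1
      simpa using h1
  have hP3 : (xR9 k + yR9 k) • Ideal.Quotient.mk (Ideal.span {xR9 k ^ 2}) (xR9 k) = 0 := by
    have hrw : (xR9 k + yR9 k) • Ideal.Quotient.mk (Ideal.span {xR9 k ^ 2}) (xR9 k)
        = Ideal.Quotient.mk (Ideal.span {xR9 k ^ 2}) ((xR9 k + yR9 k) * xR9 k) := rfl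
    rw [hrw, Ideal.Quotient.eq_zero_iff_mem]
    have hyx : yR9 k * xR9 k = 0 := by
      rw [← map_mul, Ideal.Quotient.eq_zero_iff_mem, mul_comm]
      exact Ideal.mem_span_singleton_self _
    rw [add_mul, hyx, add_zero, ← sq]
    exact Ideal.mem_span_singleton_self _
  have hP4 : Submodule.torsion (R9 k) (R9 k ⧸ Ideal.span {xR9 k ^ 2}) ≠ ⊥ := by
    intro hbot
    have hmem : Ideal.Quotient.mk (Ideal.span {xR9 k ^ 2}) (xR9 k) ∈
        Submodule.torsion (R9 k) (R9 k ⧸ Ideal.span {xR9 k ^ 2}) :=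
      (Submodule.mem_torsion_iff _).mpr ⟨⟨_, hP2⟩, by rw [Submonoid.smul_def]; exact hP3⟩
    rw [hbot, Submodule.mem_bot] at hmem
    exact hP1 hmem
  have hJI : Ideal.span {xR9 k ^ 2} ≤ Ideal.span {xR9 k} := by
    rw [Ideal.span_le, Set.singleton_subset_iff]
    exact Ideal.mem_span_singleton.mpr (dvd_pow_self _ two_ne_zero)
  have key : (Ideal.span {xR9 k} • (⊤ : Submodule (R9 k) (R9 k ⧸ Ideal.span {xR9 k ^ 2})))
      = Submodule.map (Ideal.span {xR9 k ^ 2}).mkQ (Ideal.span {xR9 k}) := by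
    have h1 : (⊤ : Submodule (R9 k) (R9 k ⧸ Ideal.span {xR9 k ^ 2}))
        = Submodule.map (Ideal.span {xR9 k ^ 2}).mkQ ⊤ := by
      rw [Submodule.map_top, Submodule.range_mkQ]
    rw [h1, ← Submodule.map_smul'']
    congr 1
    rw [Ideal.smul_eq_mul, Ideal.mul_top]
  have e : TensorProduct (R9 k) (R9 k ⧸ Ideal.span {xR9 k}) (R9 k ⧸ Ideal.span {xR9 k ^ 2})
      ≃ₗ[R9 k] (R9 k ⧸ Ideal.span {xR9 k}) :=
    (TensorProduct.quotTensorEquivQuotSMul (R9 k ⧸ Ideal.span {xR9 k ^ 2}) (Ideal.span {xR9 k}))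
      ≪≫ₗ Submodule.quotEquivOfEq _ _ key
      ≪≫ₗ Submodule.quotientQuotientEquivQuotient _ _ hJI
  exact ⟨hP1, hP2, hP3, hP4, aux_torsion_bot_of_equiv e (aux_torsion_R_mod_x k)⟩
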